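/- Under the hypotheses of the infinite-population regret theorem (η_1 > η_2 ≥ … ≥ η_m, δ = ln(β/(1-β)) ∈ (0,1], 6μ ≤ δ², T ≥ ln m/δ²), the fraction of time assigned to the best option satisfies (1/T)·∑_{t=1}^T E[P_1^{t-1}] ≥ 1 - 3δ/(η_1 - η_2). -/

import Mathlib

open MeasureTheory Finset ProbabilityTheory

set_option maxHeartbeats 2000000

theorem infinite_population_best_option
    {Ω : Type*} [MeasurableSpace Ω] (Pr : Measure Ω) [IsProbabilityMeasure Pr]
    (m : ℕ) (hm : 2 ≤ m)
    (η : Fin m → ℝ) (hη1 : η ⟨0, by omega⟩ ≤ 1) (hη0 : ∀ j, 0 ≤ η j)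
    (hηdec : ∀ i j : Fin m, i ≤ j → η j ≤ η i)
    (hgap : η ⟨1, by omega⟩ < η ⟨0, by omega⟩)
    (β μ δ : ℝ) (hβ : 1/2 < β) (hβ' : β ≤ Real.exp 1 / (Real.exp 1 + 1))
    (hδ : δ = Real.log (β / (1 - β))) (hμ0 : 0 ≤ μ) (hμ : 6 * μ ≤ δ ^ 2)
    (R : ℕ × Fin m → Ω → ℝ)
    (hRmeas : ∀ p, Measurable (R p))
    (hRval : ∀ p ω, R p ω = 0 ∨ R p ω = 1)
    (hRbern : ∀ p, Pr {ω | R p ω = 1} = ENNReal.ofReal (η p.2))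
    (hindep : iIndepFun R Pr)
    (W : ℕ → Fin m → Ω → ℝ)
    (hW0 : ∀ j ω, W 0 j ω = 1)
    (hupd : ∀ t j ω, W (t + 1) j ω =
      ((1 - μ) * W t j ω + (μ / m) * ∑ k, W t k ω) *
        Real.rpow β (R (t + 1, j) ω) * Real.rpow (1 - β) (1 - R (t + 1, j) ω))
    (P : ℕ → Fin m → Ω → ℝ)
    (hP : ∀ t j ω, P t j ω = W t j ω / ∑ k, W t k ω)
    (T : ℕ) (hT : Real.log m / δ ^ 2 ≤ T) :
    (1 / T) * ∑ t ∈ Finset.Icc 1 T, ∫ ω, P (t - 1) ⟨0, by omega⟩ ω ∂Pr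
      ≥ 1 - 3 * δ / (η ⟨0, by omega⟩ - η ⟨1, by omega⟩) := by
  -- ### basic numeric facts
  have hepos : (0:ℝ) < Real.exp 1 := Real.exp_pos 1
  have hβ0 : 0 < β := by linarith
  have hβ'' : β * (Real.exp 1 + 1) ≤ Real.exp 1 := (le_div_iff₀ (by positivity)).mp hβ'
  have hβ1 : β < 1 := by nlinarith
  have h1β : 0 < 1 - β := by linarith
  have hδ0 : 0 < δ := by
    rw [hδ]; exact Real.log_pos ((one_lt_div h1β).mpr (by linarith))
  have hβe : β / (1 - β) ≤ Real.exp 1 := by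
    rw [div_le_iff₀ h1β]; nlinarith
  have hδ1 : δ ≤ 1 := by
    rw [hδ]
    calc Real.log (β / (1-β)) ≤ Real.log (Real.exp 1) :=
          Real.log_le_log (by positivity) hβe
      _ = 1 := Real.log_exp 1
  have hexpδ : Real.exp δ = β / (1 - β) := by rw [hδ, Real.exp_log (by positivity)]
  have hμ1 : μ ≤ 1/6 := by nlinarith
  have h1μ : 0 < 1 - μ := by linarith
  have hm0 : (0:ℝ) < m := by exact_mod_cast (by omega : 0 < m)
  have hm1 : (1:ℝ) < m := by exact_mod_cast (by omega : 1 < m)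
  have hlogm : 0 < Real.log m := Real.log_pos hm1
  have hT0 : (0:ℝ) < T := lt_of_lt_of_le (div_pos hlogm (by positivity)) hT
  have hT1 : 1 ≤ T := by
    have : 0 < T := by exact_mod_cast hT0
    omega
  have hlogmT : Real.log m ≤ T * δ ^ 2 := by
    rw [div_le_iff₀ (by positivity)] at hT; linarith
  set i0 : Fin m := ⟨0, by omega⟩ with hi0def
  set i1 : Fin m := ⟨1, by omega⟩ with hi1def
  show (1 / (T:ℝ)) * ∑ t ∈ Finset.Icc 1 T, ∫ ω, P (t - 1) i0 ω ∂Pr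
      ≥ 1 - 3 * δ / (η i0 - η i1)
  have hηle1 : ∀ j, η j ≤ 1 := fun j =>
    le_trans (hηdec i0 j (by rw [Fin.le_def]; exact Nat.zero_le _)) hη1
  have hη2 : ∀ j : Fin m, j ≠ i0 → η j ≤ η i1 := by
    intro j hj
    refine hηdec i1 j ?_
    rw [Fin.le_def]
    by_contra hlt
    push_neg at hlt
    have hj0 : (j:ℕ) = 0 := by
      have : (i1 : ℕ) = 1 := rfl
      omega
    exact hj (Fin.ext hj0)
  -- ### pathwise structure
  set S : ℕ → Ω → ℝ := fun t ω => ∑ k, W t k ω with hSdef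
  have hR01 : ∀ p ω, 0 ≤ R p ω ∧ R p ω ≤ 1 := by
    intro p ω; rcases hRval p ω with h | h <;> rw [h] <;> norm_num
  have hW' : ∀ t j ω, W (t + 1) j ω =
      ((1 - β) * Real.exp (δ * R (t + 1, j) ω)) *
        ((1 - μ) * W t j ω + (μ / m) * S t ω) := by
    have hrpow0 : ∀ x : ℝ, Real.rpow x 0 = 1 := fun x => Real.rpow_zero x
    have hrpow1 : ∀ x : ℝ, Real.rpow x 1 = x := fun x => Real.rpow_one x
    intro t j ω
    rw [hupd]
    rcases hRval (t+1, j) ω with h | h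
    · rw [h, sub_zero, hrpow0, hrpow1, mul_zero, Real.exp_zero]
      ring
    · have e1 : Real.exp (δ * 1) = β / (1 - β) := by rw [mul_one, hexpδ]
      rw [h, e1, sub_self, hrpow0, hrpow1, mul_one]
      have hS : S t ω = ∑ k, W t k ω := rfl
      rw [hS]
      field_simp
  have hWpos : ∀ t j ω, 0 < W t j ω := by
    intro t
    induction t with
    | zero => intro j ω; rw [hW0]; norm_num
    | succ t ih =>
      intro j ω
      have hS : 0 < S t ω := Finset.sum_pos (fun k _ => ih k ω) ⟨i0, Finset.mem_univ _⟩
      rw [hW']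
      have h2 : 0 ≤ (μ / m) * S t ω :=
        mul_nonneg (div_nonneg hμ0 (le_of_lt hm0)) (le_of_lt hS)
      have h1 : 0 < (1 - μ) * W t j ω + (μ / m) * S t ω :=
        add_pos_of_pos_of_nonneg (mul_pos h1μ (ih j ω)) h2
      exact mul_pos (mul_pos h1β (Real.exp_pos _)) h1
  have hSpos : ∀ t ω, 0 < S t ω := fun t ω =>
    Finset.sum_pos (fun k _ => hWpos t k ω) ⟨i0, Finset.mem_univ _⟩
  have hPsum : ∀ t ω, ∑ j, P t j ω = 1 := by
    intro t ω
    simp only [hP]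
    rw [← Finset.sum_div]
    exact div_self (ne_of_gt (hSpos t ω))
  have hP01 : ∀ t j ω, 0 ≤ P t j ω ∧ P t j ω ≤ 1 := by
    intro t j ω
    constructor
    · rw [hP]
      exact div_nonneg (le_of_lt (hWpos t j ω)) (le_of_lt (hSpos t ω))
    · rw [hP, div_le_one (hSpos t ω)]
      exact Finset.single_le_sum (fun k _ => le_of_lt (hWpos t k ω)) (Finset.mem_univ j)
  set Q : ℕ → Ω → ℝ := fun t ω => ∑ j, R (t, j) ω * ((1 - μ) * P (t-1) j ω + μ / m)
    with hQdef
  have hQnonneg : ∀ t ω, 0 ≤ Q t ω := by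
    intro t ω
    refine Finset.sum_nonneg fun j _ => mul_nonneg ((hR01 (t,j) ω).1) ?_
    exact add_nonneg (mul_nonneg (le_of_lt h1μ) ((hP01 (t-1) j ω).1))
      (div_nonneg hμ0 (le_of_lt hm0))
  have hexpR : ∀ p ω, Real.exp (δ * R p ω) = 1 + (Real.exp δ - 1) * R p ω := by
    intro p ω
    rcases hRval p ω with h | h <;> rw [h] <;> simp
  -- step recursion for S
  have hstep : ∀ t ω, S (t+1) ω =
      ((1 - β) * (1 + (Real.exp δ - 1) * Q (t+1) ω)) * S t ω := by
    intro t ω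
    have hWS : ∀ j, W t j ω = P t j ω * S t ω := by
      intro j
      have hS : S t ω = ∑ k, W t k ω := rfl
      rw [hP, hS, div_mul_cancel₀ _ (ne_of_gt (hSpos t ω))]
    calc S (t+1) ω
        = ∑ j, ((1-β) * (1 + (Real.exp δ - 1) * R (t+1, j) ω)) *
            (((1-μ) * P t j ω + μ / m) * S t ω) := by
          refine Finset.sum_congr rfl fun j _ => ?_
          rw [hW', hexpR, hWS j]
          ring
      _ = (1-β) * S t ω * ∑ j, (1 + (Real.exp δ - 1) * R (t+1, j) ω) *
            ((1-μ) * P t j ω + μ / m) := by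
          rw [Finset.mul_sum]
          refine Finset.sum_congr rfl fun j _ => ?_
          ring
      _ = (1-β) * S t ω * ((∑ j, ((1-μ) * P t j ω + μ / m)) +
            (Real.exp δ - 1) * Q (t+1) ω) := by
          congr 1
          simp only [hQdef, Nat.add_sub_cancel]
          rw [Finset.mul_sum, ← Finset.sum_add_distrib]
          refine Finset.sum_congr rfl fun j _ => ?_
          ring
      _ = ((1 - β) * (1 + (Real.exp δ - 1) * Q (t+1) ω)) * S t ω := by
          rw [Finset.sum_add_distrib, ← Finset.mul_sum, hPsum]
          rw [Finset.sum_const, Finset.card_univ, Fintype.card_fin]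
          have : (m:ℝ) * (μ / m) = μ := by field_simp
          rw [nsmul_eq_mul, this]
          ring
  -- product formula for S
  have hSprod : ∀ (n : ℕ) ω, S n ω =
      m * ∏ t ∈ Finset.Icc 1 n, ((1 - β) * (1 + (Real.exp δ - 1) * Q t ω)) := by
    intro n
    induction n with
    | zero =>
      intro ω
      simp [hSdef, hW0]
    | succ n ih =>
      intro ω
      rw [hstep, ih, Finset.prod_Icc_succ_top (by omega : 1 ≤ n + 1)]
      ring
  -- lower bound for W at i0
  have hWlb : ∀ (n : ℕ) ω,
      ((1-β) * (1-μ))^n * Real.exp (δ * ∑ s ∈ Finset.Icc 1 n, R (s, i0) ω)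
        ≤ W n i0 ω := by
    intro n
    induction n with
    | zero => intro ω; simp [hW0]
    | succ n ih =>
      intro ω
      rw [hW']
      have h1 : ((1-β) * (1-μ))^(n+1) *
          Real.exp (δ * ∑ s ∈ Finset.Icc 1 (n+1), R (s, i0) ω)
          = ((1-β) * Real.exp (δ * R (n+1, i0) ω)) *
            ((1-μ) * (((1-β)*(1-μ))^n *
              Real.exp (δ * ∑ s ∈ Finset.Icc 1 n, R (s, i0) ω))) := by
        rw [Finset.sum_Icc_succ_top (by omega : 1 ≤ n + 1), mul_add, Real.exp_add]
        ring
      rw [h1]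
      have h2 : (1-μ) * (((1-β)*(1-μ))^n *
          Real.exp (δ * ∑ s ∈ Finset.Icc 1 n, R (s, i0) ω))
          ≤ (1-μ) * W n i0 ω + (μ / m) * S n ω := by
        have h3 : 0 ≤ (μ / m) * S n ω :=
          mul_nonneg (div_nonneg hμ0 (le_of_lt hm0)) (le_of_lt (hSpos n ω))
        have h5 := mul_le_mul_of_nonneg_left (ih ω) (le_of_lt h1μ)
        linarith
      have h4 : (0:ℝ) ≤ (1-β) * Real.exp (δ * R (n+1, i0) ω) :=
        le_of_lt (mul_pos h1β (Real.exp_pos _))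
      exact mul_le_mul_of_nonneg_left h2 h4
  -- ### pathwise key inequality
  have hlog1μ : - Real.log (1 - μ) ≤ 2 * μ := by
    have h := Real.log_le_sub_one_of_pos (show (0:ℝ) < 1 / (1-μ) by positivity)
    rw [Real.log_div one_ne_zero (ne_of_gt h1μ), Real.log_one] at h
    have : 1 / (1-μ) - 1 = μ / (1-μ) := by field_simp; ring
    rw [this] at h
    have h2 : μ / (1-μ) ≤ 2 * μ := by
      rw [div_le_iff₀ h1μ]
      nlinarith
    linarith
  have hcard : (Finset.Icc 1 T).card = T := by rw [Nat.card_Icc]; omega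
  have hexp1 : 1 ≤ Real.exp δ := by nlinarith [Real.add_one_le_exp δ]
  have key : ∀ ω, δ * ∑ s ∈ Finset.Icc 1 T, R (s, i0) ω ≤
      Real.log m + 2 * μ * T + (Real.exp δ - 1) * ∑ t ∈ Finset.Icc 1 T, Q t ω := by
    intro ω
    have hcpos : ∀ t, 0 < 1 + (Real.exp δ - 1) * Q t ω := by
      intro t
      have := mul_nonneg (by linarith : (0:ℝ) ≤ Real.exp δ - 1) (hQnonneg t ω)
      linarith
    have hWleS : W T i0 ω ≤ S T ω :=
      Finset.single_le_sum (fun k _ => le_of_lt (hWpos T k ω)) (Finset.mem_univ i0)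
    -- lower bound on log S T
    have hWlog : (T:ℝ) * Real.log (1-β) + T * Real.log (1-μ)
        + δ * ∑ s ∈ Finset.Icc 1 T, R (s, i0) ω ≤ Real.log (S T ω) := by
      have h1 : Real.log (((1-β)*(1-μ))^T *
          Real.exp (δ * ∑ s ∈ Finset.Icc 1 T, R (s, i0) ω))
          = T * Real.log (1-β) + T * Real.log (1-μ)
            + δ * ∑ s ∈ Finset.Icc 1 T, R (s, i0) ω := by
        rw [Real.log_mul (pow_ne_zero _ (ne_of_gt (mul_pos h1β h1μ))) (Real.exp_ne_zero _),
          Real.log_exp, Real.log_pow, Real.log_mul (ne_of_gt h1β) (ne_of_gt h1μ)]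
        ring
      rw [← h1]
      refine Real.log_le_log ?_ (le_trans (hWlb T ω) hWleS)
      exact mul_pos (pow_pos (mul_pos h1β h1μ) T) (Real.exp_pos _)
    -- upper bound on log S T
    have hlogS : Real.log (S T ω) ≤ Real.log m + T * Real.log (1-β)
        + (Real.exp δ - 1) * ∑ t ∈ Finset.Icc 1 T, Q t ω := by
      have hprodpos : (0:ℝ) < ∏ t ∈ Finset.Icc 1 T,
          ((1-β) * (1 + (Real.exp δ - 1) * Q t ω)) :=
        Finset.prod_pos fun t _ => mul_pos h1β (hcpos t)
      rw [hSprod T ω, Real.log_mul (ne_of_gt hm0) (ne_of_gt hprodpos),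
        Real.log_prod (fun t _ => ne_of_gt (mul_pos h1β (hcpos t)))]
      have hle : ∀ t ∈ Finset.Icc 1 T,
          Real.log ((1-β) * (1 + (Real.exp δ - 1) * Q t ω))
            ≤ Real.log (1-β) + (Real.exp δ - 1) * Q t ω := by
        intro t _
        rw [Real.log_mul (ne_of_gt h1β) (ne_of_gt (hcpos t))]
        have := Real.log_le_sub_one_of_pos (hcpos t)
        linarith
      have hsum := Finset.sum_le_sum hle
      rw [Finset.sum_add_distrib, Finset.sum_const, hcard, nsmul_eq_mul,
        ← Finset.mul_sum] at hsum
      linarith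
    have hμT : - ((T:ℝ) * Real.log (1-μ)) ≤ 2*μ*T := by
      have := mul_le_mul_of_nonneg_left hlog1μ (le_of_lt hT0)
      nlinarith
    linarith
  -- ### integrability and measurability
  have intab : ∀ (f : Ω → ℝ) (C : ℝ), Measurable f → (∀ ω, |f ω| ≤ C) →
      Integrable f Pr := by
    intro f C hf hb
    refine Integrable.mono' (integrable_const C) hf.aestronglyMeasurable ?_
    exact Filter.Eventually.of_forall fun ω => by
      simpa [Real.norm_eq_abs] using hb ω
  set F : ℕ → MeasurableSpace Ω := fun t =>
    ⨆ p ∈ {q : ℕ × Fin m | q.1 ≤ t}, MeasurableSpace.comap (R p) inferInstance with hFdef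
  have hFle : ∀ t, F t ≤ ‹MeasurableSpace Ω› := fun t =>
    iSup₂_le fun p _ => (hRmeas p).comap_le
  have hFmono : ∀ s t : ℕ, s ≤ t → F s ≤ F t := by
    intro s t hst
    refine biSup_mono fun p hp => ?_
    exact le_trans hp hst
  have hRFm : ∀ (p : ℕ × Fin m) (t : ℕ), p.1 ≤ t → Measurable[F t] (R p) := by
    intro p t hp
    refine measurable_iff_comap_le.mpr ?_
    exact le_biSup (fun q : ℕ × Fin m => MeasurableSpace.comap (R q) inferInstance)
      (show p ∈ {q : ℕ × Fin m | q.1 ≤ t} from hp)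
  have hWF : ∀ t j, Measurable[F t] (fun ω => W t j ω) := by
    intro t
    induction t with
    | zero =>
      intro j
      simp only [hW0]
      exact measurable_const
    | succ t ih =>
      intro j
      have hWt : ∀ k, Measurable[F (t+1)] (fun ω => W t k ω) := fun k =>
        (ih k).mono (hFmono t (t+1) (by omega)) le_rfl
      have hSt : Measurable[F (t+1)] (fun ω => S t ω) :=
        Finset.measurable_sum _ (fun k _ => hWt k)
      have hRt : Measurable[F (t+1)] (R (t+1, j)) := hRFm _ _ le_rfl
      simp only [hW']
      exact (((hRt.const_mul δ).exp.const_mul (1-β)).mul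
        (((hWt j).const_mul (1-μ)).add (hSt.const_mul (μ/m))))
  have hWm : ∀ t j, Measurable (fun ω => W t j ω) := fun t j =>
    (hWF t j).mono (hFle t) le_rfl
  have hPF : ∀ t j, Measurable[F t] (fun ω => P t j ω) := by
    intro t j
    simp only [hP]
    exact (hWF t j).div (Finset.measurable_sum _ fun k _ => hWF t k)
  have hPm : ∀ t j, Measurable (fun ω => P t j ω) := fun t j =>
    (hPF t j).mono (hFle t) le_rfl
  have hPint : ∀ t j, Integrable (fun ω => P t j ω) Pr := fun t j =>
    intab _ 1 (hPm t j) (fun ω =>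
      abs_le.mpr ⟨by linarith [(hP01 t j ω).1], (hP01 t j ω).2⟩)
  have hRint : ∀ p, Integrable (R p) Pr := fun p =>
    intab _ 1 (hRmeas p) (fun ω =>
      abs_le.mpr ⟨by linarith [(hR01 p ω).1], (hR01 p ω).2⟩)
  have hQm : ∀ t, Measurable (fun ω => Q t ω) := fun t =>
    Finset.measurable_sum _ fun j _ =>
      (hRmeas (t, j)).mul (((hPm (t-1) j).const_mul (1-μ)).add_const (μ/m))
  have hμdivm : μ / (m:ℝ) ≤ μ := by
    rw [div_le_iff₀ hm0]; nlinarith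
  have hBfact : ∀ t j ω, 0 ≤ (1-μ) * P t j ω + μ/(m:ℝ) ∧
      (1-μ) * P t j ω + μ/(m:ℝ) ≤ 1 := by
    intro t j ω
    have h2 := hP01 t j ω
    constructor
    · exact add_nonneg (mul_nonneg h1μ.le h2.1) (div_nonneg hμ0 hm0.le)
    · nlinarith [mul_le_mul_of_nonneg_left h2.2 h1μ.le]
  have hQle : ∀ t ω, Q t ω ≤ m := by
    intro t ω
    calc Q t ω ≤ ∑ _j : Fin m, (1:ℝ) := by
          refine Finset.sum_le_sum fun j _ => ?_
          have h1 := hR01 (t, j) ω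
          have hB := hBfact (t-1) j ω
          calc R (t, j) ω * ((1-μ) * P (t-1) j ω + μ/m) ≤ 1 * 1 :=
                mul_le_mul h1.2 hB.2 hB.1 zero_le_one
            _ = 1 := by norm_num
      _ = m := by simp
  have hQint : ∀ t, Integrable (fun ω => Q t ω) Pr := by
    intro t
    refine intab _ m (hQm t) fun ω => ?_
    rw [abs_of_nonneg (hQnonneg t ω)]
    exact hQle t ω
  -- ### expectations
  have hER : ∀ p : ℕ × Fin m, ∫ ω, R p ω ∂Pr = η p.2 := by
    intro p
    have hfe : (fun ω => R p ω) = (R p ⁻¹' {1}).indicator (fun _ => (1:ℝ)) := by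
      funext ω
      rcases hRval p ω with h | h
      · rw [h]
        symm
        refine Set.indicator_of_notMem ?_ _
        simp [Set.mem_preimage, h]
      · rw [h]
        symm
        refine Set.indicator_of_mem ?_ _
        simp [Set.mem_preimage, h]
    rw [hfe, integral_indicator_const _ ((hRmeas p) (measurableSet_singleton 1))]
    have hset : R p ⁻¹' {1} = {ω | R p ω = 1} := rfl
    rw [hset, measureReal_def, hRbern p, ENNReal.toReal_ofReal (hη0 p.2)]
    simp
  have hEPsum : ∀ t, ∑ j, ∫ ω, P t j ω ∂Pr = 1 := by
    intro t
    rw [← integral_finset_sum _ (fun j _ => hPint t j)]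
    simp only [hPsum]
    simp
  have hEP01 : ∀ t j, 0 ≤ ∫ ω, P t j ω ∂Pr ∧ ∫ ω, P t j ω ∂Pr ≤ 1 := by
    intro t j
    constructor
    · exact integral_nonneg fun ω => (hP01 t j ω).1
    · calc ∫ ω, P t j ω ∂Pr ≤ ∫ _ω, (1:ℝ) ∂Pr :=
            integral_mono (hPint t j) (integrable_const 1) fun ω => (hP01 t j ω).2
        _ = 1 := by simp
  -- ### independence
  have hii : iIndep (fun p : ℕ × Fin m =>
      MeasurableSpace.comap (R p) inferInstance) Pr :=
    (iIndepFun_iff_iIndep _ _ _).mp hindep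
  have hindepPR : ∀ (t : ℕ) (j : Fin m), 1 ≤ t →
      IndepFun (R (t, j)) (fun ω => (1-μ) * P (t-1) j ω + μ / m) Pr := by
    intro t j ht
    have h := indep_biSup_compl (fun p => (hRmeas p).comap_le) hii
      {q : ℕ × Fin m | q.1 ≤ t - 1}
    rw [IndepFun_iff_Indep]
    have h1 : MeasurableSpace.comap (R (t, j)) inferInstance ≤
        ⨆ p ∈ {q : ℕ × Fin m | q.1 ≤ t - 1}ᶜ,
          MeasurableSpace.comap (R p) inferInstance := by
      refine le_biSup (fun q : ℕ × Fin m =>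
        MeasurableSpace.comap (R q) inferInstance) ?_
      simp only [Set.mem_compl_iff, Set.mem_setOf_eq]
      omega
    have h2 : MeasurableSpace.comap
        (fun ω => (1-μ) * P (t-1) j ω + μ / m) inferInstance ≤
        ⨆ p ∈ {q : ℕ × Fin m | q.1 ≤ t - 1},
          MeasurableSpace.comap (R p) inferInstance := by
      refine measurable_iff_comap_le.mp ?_
      exact ((hPF (t-1) j).const_mul (1-μ)).add_const _
    exact (indep_of_indep_of_le_left (indep_of_indep_of_le_right h h1) h2).symm
  -- ### expectation of Q
  have hEQ : ∀ t : ℕ, 1 ≤ t → ∫ ω, Q t ω ∂Pr =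
      ∑ j, η j * ((1-μ) * (∫ ω, P (t-1) j ω ∂Pr) + μ / m) := by
    intro t ht
    have hint : ∀ j : Fin m,
        Integrable (fun ω => R (t, j) ω * ((1-μ) * P (t-1) j ω + μ/m)) Pr := by
      intro j
      refine intab _ 2
        ((hRmeas (t, j)).mul (((hPm (t-1) j).const_mul (1-μ)).add_const _))
        fun ω => ?_
      have h1 := hR01 (t, j) ω
      have hB := hBfact (t-1) j ω
      rw [abs_mul]
      have hb1 : |R (t, j) ω| ≤ 1 := abs_le.mpr ⟨by linarith [h1.1], h1.2⟩
      have hb2 : |(1-μ) * P (t-1) j ω + μ/m| ≤ 2 :=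
        abs_le.mpr ⟨by linarith [hB.1], by linarith [hB.2]⟩
      calc |R (t, j) ω| * |(1-μ) * P (t-1) j ω + μ/m| ≤ 1 * 2 :=
            mul_le_mul hb1 hb2 (abs_nonneg _) (by norm_num)
        _ = 2 := by norm_num
    simp only [hQdef]
    rw [integral_finset_sum _ fun j _ => hint j]
    refine Finset.sum_congr rfl fun j _ => ?_
    have hBint : Integrable (fun ω => (1-μ) * P (t-1) j ω + μ/m) Pr :=
      ((hPint (t-1) j).const_mul (1-μ)).add (integrable_const _)
    have hmul : ∫ ω, R (t, j) ω * ((1-μ) * P (t-1) j ω + μ/m) ∂Pr =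
        (∫ ω, R (t, j) ω ∂Pr) * ∫ ω, ((1-μ) * P (t-1) j ω + μ/m) ∂Pr :=
      (hindepPR t j ht).integral_mul_eq_mul_integral (hRint (t, j)).aestronglyMeasurable hBint.aestronglyMeasurable
    rw [hmul, hER (t, j)]
    congr 1
    rw [integral_add ((hPint (t-1) j).const_mul (1-μ)) (integrable_const _),
      integral_const_mul]
    simp
  -- ### integrate the key inequality
  have hQint0 : ∀ t, 0 ≤ ∫ ω, Q t ω ∂Pr := fun t => integral_nonneg (hQnonneg t)
  have hmain : δ * ((T:ℝ) * η i0) ≤ Real.log m + 2*μ*T +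
      (Real.exp δ - 1) * ∑ t ∈ Finset.Icc 1 T, ∫ ω, Q t ω ∂Pr := by
    have hL : Integrable (fun ω => δ * ∑ s ∈ Finset.Icc 1 T, R (s, i0) ω) Pr :=
      (integrable_finset_sum _ fun s _ => hRint _).const_mul δ
    have hRHS : Integrable (fun ω => Real.log m + 2*μ*T +
        (Real.exp δ - 1) * ∑ t ∈ Finset.Icc 1 T, Q t ω) Pr :=
      (integrable_const _).add
        ((integrable_finset_sum _ fun t _ => hQint t).const_mul _)
    have hmono := integral_mono hL hRHS key
    rw [integral_const_mul, integral_finset_sum _ (fun s _ => hRint _)] at hmono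
    simp only [hER] at hmono
    rw [Finset.sum_const, hcard, nsmul_eq_mul] at hmono
    rw [integral_add (integrable_const _)
        ((integrable_finset_sum _ fun t _ => hQint t).const_mul _),
      integral_const, integral_const_mul,
      integral_finset_sum _ (fun t _ => hQint t)] at hmono
    simpa using hmono
  -- ### per-round bound on E[Q t]
  have hexp2 : Real.exp δ - 1 ≤ δ + δ^2 := by
    have hb := Real.exp_bound' (le_of_lt hδ0) hδ1 (by norm_num : 0 < 2)
    simp only [Finset.sum_range_succ, Finset.sum_range_zero] at hb
    norm_num at hb
    nlinarith [sq_nonneg δ]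
  set p : ℕ → ℝ := fun t => ∫ ω, P (t-1) i0 ω ∂Pr with hpdef
  have hbound : ∀ t ∈ Finset.Icc 1 T, (Real.exp δ - 1) * ∫ ω, Q t ω ∂Pr ≤
      δ * ((η i0 - η i1) * p t + η i1) + δ^2 + 2*μ := by
    intro t htmem
    have ht : 1 ≤ t := (Finset.mem_Icc.mp htmem).1
    have hq : ∀ j, 0 ≤ ∫ ω, P (t-1) j ω ∂Pr ∧ ∫ ω, P (t-1) j ω ∂Pr ≤ 1 :=
      fun j => hEP01 (t-1) j
    have hqsum := hEPsum (t-1)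
    -- split off the best index
    have hsplit : ∑ j, η j * (∫ ω, P (t-1) j ω ∂Pr)
        ≤ η i0 * p t + η i1 * (1 - p t) := by
      have h1 : ∑ j ∈ Finset.univ.erase i0, η j * (∫ ω, P (t-1) j ω ∂Pr)
          ≤ η i1 * ∑ j ∈ Finset.univ.erase i0, (∫ ω, P (t-1) j ω ∂Pr) := by
        rw [Finset.mul_sum]
        exact Finset.sum_le_sum fun j hj =>
          mul_le_mul_of_nonneg_right (hη2 j (Finset.ne_of_mem_erase hj)) (hq j).1
      have h2 : (∫ ω, P (t-1) i0 ω ∂Pr) +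
          ∑ j ∈ Finset.univ.erase i0, (∫ ω, P (t-1) j ω ∂Pr) = 1 := by
        rw [← hqsum]
        exact Finset.add_sum_erase Finset.univ
          (fun j => ∫ ω, P (t-1) j ω ∂Pr) (Finset.mem_univ i0)
      have h3 : η i0 * (∫ ω, P (t-1) i0 ω ∂Pr) +
          ∑ j ∈ Finset.univ.erase i0, (η j * ∫ ω, P (t-1) j ω ∂Pr)
          = ∑ j, η j * (∫ ω, P (t-1) j ω ∂Pr) :=
        Finset.add_sum_erase Finset.univ
          (fun j => η j * (∫ ω, P (t-1) j ω ∂Pr)) (Finset.mem_univ i0)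
      have hpt : p t = ∫ ω, P (t-1) i0 ω ∂Pr := rfl
      rw [hpt, ← h3]
      have h4 : ∑ j ∈ Finset.univ.erase i0, (∫ ω, P (t-1) j ω ∂Pr)
          = 1 - ∫ ω, P (t-1) i0 ω ∂Pr := by linarith
      rw [h4] at h1
      linarith
    have hsumη : ∑ j, η j ≤ (m:ℝ) := by
      calc ∑ j, η j ≤ ∑ _j : Fin m, (1:ℝ) := Finset.sum_le_sum fun j _ => hηle1 j
        _ = m := by simp
    have hA0 : 0 ≤ ∑ j, η j * (∫ ω, P (t-1) j ω ∂Pr) :=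
      Finset.sum_nonneg fun j _ => mul_nonneg (hη0 j) (hq j).1
    have hEQle : ∫ ω, Q t ω ∂Pr ≤ (η i0 * p t + η i1 * (1 - p t)) + μ := by
      have hEQ' : ∫ ω, Q t ω ∂Pr =
          (1-μ) * (∑ j, η j * (∫ ω, P (t-1) j ω ∂Pr)) + (μ/m) * ∑ j, η j := by
        rw [hEQ t ht, Finset.mul_sum, Finset.mul_sum, ← Finset.sum_add_distrib]
        exact Finset.sum_congr rfl fun j _ => by ring
      have h4 : (μ/m) * ∑ j, η j ≤ μ := by
        calc (μ/(m:ℝ)) * ∑ j, η j ≤ (μ/m) * m :=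
              mul_le_mul_of_nonneg_left hsumη (div_nonneg hμ0 (le_of_lt hm0))
          _ = μ := by field_simp
      have h5 : (1-μ) * (∑ j, η j * (∫ ω, P (t-1) j ω ∂Pr))
          ≤ ∑ j, η j * (∫ ω, P (t-1) j ω ∂Pr) := by nlinarith
      linarith
    have hp01 : 0 ≤ p t ∧ p t ≤ 1 := hq i0
    have hcc1 : η i0 * p t + η i1 * (1 - p t) ≤ 1 := by
      nlinarith [hηle1 i0, hηle1 i1, hη0 i0, hη0 i1, hp01.1, hp01.2, le_of_lt hgap]
    have hcc0 : 0 ≤ η i0 * p t + η i1 * (1 - p t) := by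
      have := hp01.1
      have := hp01.2
      nlinarith [hη0 i0, hη0 i1]
    calc (Real.exp δ - 1) * ∫ ω, Q t ω ∂Pr
        ≤ (δ + δ^2) * ∫ ω, Q t ω ∂Pr :=
          mul_le_mul_of_nonneg_right hexp2 (hQint0 t)
      _ ≤ (δ + δ^2) * ((η i0 * p t + η i1 * (1 - p t)) + μ) := by
          refine mul_le_mul_of_nonneg_left hEQle ?_
          nlinarith
      _ ≤ δ * ((η i0 - η i1) * p t + η i1) + δ^2 + 2*μ := by
          have e1 : δ^2 * (η i0 * p t + η i1 * (1 - p t)) ≤ δ^2 * 1 :=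
            mul_le_mul_of_nonneg_left hcc1 (sq_nonneg δ)
          have e2 : δ*μ ≤ μ := by nlinarith
          have e3 : δ^2*μ ≤ μ := by nlinarith
          calc (δ + δ^2) * ((η i0 * p t + η i1 * (1 - p t)) + μ)
              = δ * (η i0 * p t + η i1 * (1 - p t)) +
                (δ^2 * (η i0 * p t + η i1 * (1 - p t)) + (δ*μ + δ^2*μ)) := by ring
            _ ≤ δ * (η i0 * p t + η i1 * (1 - p t)) + (δ^2 * 1 + (μ + μ)) := by
                linarith
            _ = δ * ((η i0 - η i1) * p t + η i1) + δ^2 + 2*μ := by ring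
  -- ### final arithmetic
  have hsum2 : (Real.exp δ - 1) * ∑ t ∈ Finset.Icc 1 T, ∫ ω, Q t ω ∂Pr ≤
      δ * (η i0 - η i1) * (∑ t ∈ Finset.Icc 1 T, p t) + T * (δ * η i1)
        + T * (δ^2 + 2*μ) := by
    rw [Finset.mul_sum]
    have := Finset.sum_le_sum hbound
    have heq : ∑ t ∈ Finset.Icc 1 T,
        (δ * ((η i0 - η i1) * p t + η i1) + δ^2 + 2*μ)
        = δ * (η i0 - η i1) * (∑ t ∈ Finset.Icc 1 T, p t) + T * (δ * η i1)
          + T * (δ^2 + 2*μ) := by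
      have hlin : ∀ t, δ * ((η i0 - η i1) * p t + η i1) + δ^2 + 2*μ
          = (δ * (η i0 - η i1)) * p t + (δ * η i1 + (δ^2 + 2*μ)) := fun t => by ring
      rw [Finset.sum_congr rfl fun t _ => hlin t, Finset.sum_add_distrib,
        ← Finset.mul_sum, Finset.sum_const, hcard, nsmul_eq_mul]
      ring
    rw [heq] at this
    exact this
  have hg0 : 0 < η i0 - η i1 := by linarith
  set Sp : ℝ := ∑ t ∈ Finset.Icc 1 T, p t with hSpdef
  have hfinal : (η i0 - η i1) * ((T:ℝ) - Sp) ≤ 3 * δ * T := by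
    have h8 : δ * ((η i0 - η i1) * ((T:ℝ) - Sp)) ≤ δ * (3 * δ * T) := by
      have hs : δ * (T * η i0) ≤ Real.log m + 2*μ*T +
          (δ * (η i0 - η i1) * Sp + T * (δ * η i1) + T * (δ^2 + 2*μ)) := by
        linarith [hmain, hsum2]
      nlinarith [hlogmT, hμ, hT0, mul_le_mul_of_nonneg_left hμ (le_of_lt hT0)]
    have := (mul_le_mul_iff_right₀ hδ0).mp h8
    linarith
  have hSub : (1 - 3*δ/(η i0 - η i1)) * T ≤ Sp := by
    have h9 : (T:ℝ) - Sp ≤ 3*δ*T/(η i0 - η i1) := by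
      rw [le_div_iff₀ hg0]
      nlinarith
    have h10 : (1 - 3*δ/(η i0 - η i1)) * T = T - (3*δ*T)/(η i0 - η i1) := by
      field_simp
    linarith [h10.le, h10.ge]
  rw [ge_iff_le]
  have hTne : (T:ℝ) ≠ 0 := ne_of_gt hT0
  calc 1 - 3*δ/(η i0 - η i1) = ((1 - 3*δ/(η i0 - η i1)) * T) / T :=
        (mul_div_cancel_right₀ _ hTne).symm
    _ ≤ Sp / T := by gcongr
    _ = (1/T) * Sp := by ring
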